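/- Let 1 < p < ∞, let Ω ⊂ ℝ^N be open and bounded, let v : ℝ^{M×N} → ℝ be continuous with p-growth and with L^p→L¹ uniformly continuous Nemytskii operator on bounded sets (‖v∘U − v∘W‖_{L¹} ≤ γ(‖U−W‖_{L^p})(1+‖U‖_{L^p}^p+‖W‖_{L^p}^p) with γ continuous, γ(0)=0). Let u ∈ W^{1,p}(Ω;ℝ^M) and let (w_n) ⊂ W^{1,p}(Ω;ℝ^M) be bounded with |{∇w_n ≠ 0}| → 0. Then ∫_Ω [v(∇w_n + ∇u) − v(∇u)] dx − ∫_Ω [v(∇w_n + z_n) − v(z_n)] dx = 0 for z_n := χ_{{∇w_n ≠ 0}}∇u, and z_n → 0 in L^p; consequently liminf_n ∫_Ω v(∇w_n+∇u)φ dx − ∫_Ω v(∇u)φ dx = liminf_n ∫_Ω v(∇w_n)φ dx − ∫_Ω v(0)φ dx + o(1) for φ ∈ C(Ω̄). -/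

import Mathlib

open MeasureTheory Metric Filter
open scoped ENNReal Topology

noncomputable section

abbrev EN (N : ℕ) : Type := EuclideanSpace ℝ (Fin N)
abbrev Mat (M N : ℕ) : Type := Matrix (Fin M) (Fin N) ℝ

/-- Frobenius norm on real `M × N` matrices. -/
def fnorm {M N : ℕ} (s : Mat M N) : ℝ := Real.sqrt (∑ i, ∑ j, (s i j) ^ 2)

/-- The matrix of partial derivatives (gradient) of `φ : ℝ^N → ℝ^M` at `x`,
computed via the Fréchet derivative (junk value `0` where `φ` is not differentiable). -/
def grad {M N : ℕ} (φ : EN N → EN M) (x : EN N) : Mat M N :=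
  Matrix.of fun i j => fderiv ℝ φ x (EuclideanSpace.single j 1) i

namespace Stmt12Aux

instance matMS {M N : ℕ} : MeasurableSpace (Mat M N) := MeasurableSpace.pi
instance matBorel {M N : ℕ} : BorelSpace (Mat M N) := Pi.borelSpace
instance matSC {M N : ℕ} : SecondCountableTopology (Mat M N) :=
  inferInstanceAs (SecondCountableTopology (Fin M → Fin N → ℝ))
instance matPM {M N : ℕ} : TopologicalSpace.PseudoMetrizableSpace (Mat M N) :=
  inferInstanceAs (TopologicalSpace.PseudoMetrizableSpace (Fin M → Fin N → ℝ))

lemma fnorm_eq_norm {M N : ℕ} (s : Mat M N) :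
    fnorm s = ‖((WithLp.equiv 2 (Fin M × Fin N → ℝ)).symm fun q => s q.1 q.2)‖ := by
  rw [EuclideanSpace.norm_eq, fnorm, ← Finset.sum_product']
  congr 1
  apply Finset.sum_congr rfl
  intro q _
  simp [sq_abs]

lemma fnorm_zero {M N : ℕ} : fnorm (0 : Mat M N) = 0 := by simp [fnorm]

lemma fnorm_nonneg {M N : ℕ} (s : Mat M N) : 0 ≤ fnorm s := Real.sqrt_nonneg _

lemma fnorm_continuous {M N : ℕ} : Continuous (fnorm (M := M) (N := N)) := by
  unfold fnorm
  fun_prop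

lemma fnorm_add_le {M N : ℕ} (s t : Mat M N) : fnorm (s + t) ≤ fnorm s + fnorm t := by
  rw [fnorm_eq_norm, fnorm_eq_norm, fnorm_eq_norm]
  exact norm_add_le ((WithLp.equiv 2 (Fin M × Fin N → ℝ)).symm fun q => s q.1 q.2)
    ((WithLp.equiv 2 (Fin M × Fin N → ℝ)).symm fun q => t q.1 q.2)

lemma fnorm_neg {M N : ℕ} (s : Mat M N) : fnorm (-s) = fnorm s := by
  simp [fnorm]

lemma fnorm_le_add_left {M N : ℕ} (a b : Mat M N) : fnorm a ≤ fnorm (a + b) + fnorm b := by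
  have := fnorm_add_le (a + b) (-b)
  simpa [fnorm_neg] using this

lemma fnorm_le_add_sub {M N : ℕ} (a b : Mat M N) : fnorm a ≤ fnorm b + fnorm (a - b) := by
  have := fnorm_add_le b (a - b)
  simpa using this

lemma measurable_grad {M N : ℕ} (φ : EN N → EN M) : Measurable (grad φ) := by
  apply measurable_pi_lambda
  intro i
  apply measurable_pi_lambda
  intro j
  exact ((EuclideanSpace.proj i : EN M →L[ℝ] ℝ).continuous.measurable).comp
    (measurable_fderiv_apply_const ℝ φ (EuclideanSpace.single j 1))

lemma sm_grad {M N : ℕ} (φ : EN N → EN M) : StronglyMeasurable (grad φ) :=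
  (measurable_grad φ).stronglyMeasurable

lemma sSup_eq_sSup_of_shift {S T : Set ℝ}
    (h : ∀ ε > (0:ℝ), ∀ a ∈ S, a - ε ∈ T) (h' : ∀ ε > (0:ℝ), ∀ a ∈ T, a - ε ∈ S) :
    sSup S = sSup T := by
  rcases S.eq_empty_or_nonempty with hS | hS
  · rcases T.eq_empty_or_nonempty with hT | hT
    · rw [hS, hT]
    · exfalso
      obtain ⟨a, ha⟩ := hT
      exact absurd (h' 1 one_pos a ha) (by simp [hS])
  · have hT : T.Nonempty := by
      obtain ⟨a, ha⟩ := hS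
      exact ⟨a - 1, h 1 one_pos a ha⟩
    by_cases hbS : BddAbove S
    · have hbT : BddAbove T := by
        refine ⟨sSup S + 1, fun a ha => ?_⟩
        have := le_csSup hbS (h' 1 one_pos a ha)
        linarith
      apply le_antisymm
      · refine le_of_forall_pos_le_add fun ε hε => ?_
        refine csSup_le hS fun a ha => ?_
        have := le_csSup hbT (h ε hε a ha)
        linarith
      · refine le_of_forall_pos_le_add fun ε hε => ?_
        refine csSup_le hT fun a ha => ?_
        have := le_csSup hbS (h' ε hε a ha)
        linarith
    · have hbT : ¬ BddAbove T := by
        intro ⟨c, hc⟩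
        apply hbS
        refine ⟨c + 1, fun a ha => ?_⟩
        have := hc (h 1 one_pos a ha)
        linarith
      rw [Real.sSup_of_not_bddAbove hbS, Real.sSup_of_not_bddAbove hbT]

lemma liminf_add_tendsto_zero {b d : ℕ → ℝ} (hd : Tendsto d atTop (𝓝 0)) :
    liminf (fun n => b n + d n) atTop = liminf b atTop := by
  rw [liminf_eq, liminf_eq]
  apply sSup_eq_sSup_of_shift
  · intro ε hε a ha
    have hev : ∀ᶠ n in atTop, d n ∈ Set.Ioo (-ε) ε :=
      hd (Ioo_mem_nhds (by linarith) hε)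
    simp only [Set.mem_setOf_eq] at ha ⊢
    filter_upwards [ha, hev] with n h1 h2
    have := h2.2
    linarith
  · intro ε hε a ha
    have hev : ∀ᶠ n in atTop, d n ∈ Set.Ioo (-ε) ε :=
      hd (Ioo_mem_nhds (by linarith) hε)
    simp only [Set.mem_setOf_eq] at ha ⊢
    filter_upwards [ha, hev] with n h1 h2
    have := h2.1
    linarith

lemma lemA {M N : ℕ} (p : ℝ) (hp : 1 < p) (Ω : Set (EN N)) (hfin : volume Ω ≠ ∞)
    (v : Mat M N → ℝ) (hv : Continuous v) (γ : ℝ → ℝ) (hγc : Continuous γ)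
    (hNem : ∀ U W : EN N → Mat M N,
      AEStronglyMeasurable U (volume.restrict Ω) →
      AEStronglyMeasurable W (volume.restrict Ω) →
      (eLpNorm (fun x => v (U x) - v (W x)) 1 (volume.restrict Ω)).toReal ≤
        γ ((eLpNorm (fun x => fnorm (U x - W x)) (ENNReal.ofReal p)
              (volume.restrict Ω)).toReal)
          * (1 + ((eLpNorm (fun x => fnorm (U x)) (ENNReal.ofReal p)
              (volume.restrict Ω)).toReal) ^ p
            + ((eLpNorm (fun x => fnorm (W x)) (ENNReal.ofReal p)
              (volume.restrict Ω)).toReal) ^ p))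
    (X Y : EN N → Mat M N) (hX : StronglyMeasurable X) (hY : StronglyMeasurable Y)
    (hXY : eLpNorm (fun x => fnorm (X x - Y x)) (ENNReal.ofReal p) (volume.restrict Ω) ≠ ∞) :
    eLpNorm (fun x => v (X x) - v (Y x)) 1 (volume.restrict Ω) ≠ ∞ := by
  classical
  set μ := volume.restrict Ω with hμdef
  set p' := ENNReal.ofReal p with hp'def
  have hp'1 : 1 ≤ p' := ENNReal.one_le_ofReal.mpr hp.le
  have hppos : (0:ℝ) < p := lt_trans one_pos hp
  haveI : IsFiniteMeasure μ := ⟨by rw [hμdef, Measure.restrict_apply_univ]; exact hfin.lt_top⟩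
  intro hcon
  set g : EN N → ℝ := fun x => v (X x) - v (Y x) with hgdef
  have hgSM : StronglyMeasurable g :=
    (hv.comp_stronglyMeasurable hX).sub (hv.comp_stronglyMeasurable hY)
  have hgm : Measurable g := hgSM.measurable
  set E : ℕ → Set (EN N) := fun j => {x | |g x| ≤ (j:ℝ)} with hEdef
  have hEm : ∀ j, MeasurableSet (E j) := fun j => measurableSet_le hgm.abs measurable_const
  set X' : ℕ → EN N → Mat M N := fun j => (E j).piecewise X Y with hX'def
  have hX'SM : ∀ j, StronglyMeasurable (X' j) := fun j => hX.piecewise (hEm j) hY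
  have hptw : ∀ j x, v (X' j x) - v (Y x) = (E j).indicator g x := by
    intro j x
    by_cases hx : x ∈ E j
    · simp only [X', Set.indicator_of_mem hx, Set.piecewise_eq_of_mem _ _ _ hx]; rfl
    · simp only [X', Set.indicator_of_notMem hx, Set.piecewise_eq_of_notMem _ _ _ hx, sub_self]
  set Gfun : EN N → ℝ≥0∞ := fun x => (‖g x‖₊ : ℝ≥0∞) with hGdef
  have hGm : Measurable Gfun := hgm.nnnorm.coe_nnreal_ennreal
  set gj : ℕ → EN N → ℝ≥0∞ := fun j => (E j).indicator Gfun with hgjdef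
  have hgjm : ∀ j, Measurable (gj j) := fun j => hGm.indicator (hEm j)
  have hmono : Monotone gj := by
    intro i j hij
    apply Set.indicator_le_indicator_of_subset
    · intro x hx
      simp only [E, Set.mem_setOf_eq] at hx ⊢
      exact le_trans hx (Nat.cast_le.mpr hij)
    · intro x; exact zero_le
  have hEL : ∀ j, eLpNorm (fun x => v (X' j x) - v (Y x)) 1 μ = ∫⁻ x, gj j x ∂μ := by
    intro j
    rw [eLpNorm_one_eq_lintegral_enorm]
    congr 1
    funext x
    rw [hptw j x]
    by_cases hx : x ∈ E j
    · simp [gj, Set.indicator_of_mem hx, Gfun]; rfl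
    · simp [gj, Set.indicator_of_notMem hx]
  have hsup : ∀ x, ⨆ j, gj j x = Gfun x := by
    intro x
    apply le_antisymm
    · exact iSup_le fun j => Set.indicator_le_self' (fun y _ => zero_le) x
    · refine le_iSup_of_le ⌈|g x|⌉₊ ?_
      have hxmem : x ∈ E ⌈|g x|⌉₊ := by
        simp only [E, Set.mem_setOf_eq]
        exact Nat.le_ceil _
      simp only [gj, Set.indicator_of_mem hxmem, le_refl]
  have hlim : ⨆ j, ∫⁻ x, gj j x ∂μ = ∫⁻ x, Gfun x ∂μ := by
    rw [← lintegral_iSup hgjm hmono]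
    congr 1
    funext x
    exact hsup x
  have htop : ∫⁻ x, Gfun x ∂μ = ∞ := by
    rw [← hcon]
    exact (eLpNorm_one_eq_lintegral_enorm (f := g)).symm
  set T : ℝ := (eLpNorm (fun x => fnorm (X x - Y x)) p' μ).toReal with hTdef
  have hT0 : 0 ≤ T := ENNReal.toReal_nonneg
  obtain ⟨Γ, hΓ⟩ := (isCompact_Icc (a := (0:ℝ)) (b := T)).exists_bound_of_continuousOn
    hγc.continuousOn
  have hΓ0 : 0 ≤ Γ := le_trans (norm_nonneg _) (hΓ 0 ⟨le_refl _, hT0⟩)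
  set cY : ℝ≥0∞ := eLpNorm (fun x => fnorm (Y x)) p' μ with hcYdef
  set R : ℝ := cY.toReal + T with hRdef
  have hR0 : 0 ≤ R := add_nonneg ENNReal.toReal_nonneg hT0
  set D : ℝ := Γ * (1 + R ^ p + R ^ p) with hDdef
  have hD0 : 0 ≤ D := by
    apply mul_nonneg hΓ0
    have := Real.rpow_nonneg hR0 p
    linarith
  have hfnYsm : AEStronglyMeasurable (fun x => fnorm (Y x)) μ :=
    (fnorm_continuous.comp_stronglyMeasurable hY).aestronglyMeasurable
  have hbound : ∀ j, (∫⁻ x, gj j x ∂μ).toReal ≤ D := by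
    intro j
    have happ := hNem (X' j) Y (hX'SM j).aestronglyMeasurable hY.aestronglyMeasurable
    rw [hEL j] at happ
    refine le_trans happ ?_
    have harg_le : eLpNorm (fun x => fnorm (X' j x - Y x)) p' μ ≤
        eLpNorm (fun x => fnorm (X x - Y x)) p' μ := by
      apply eLpNorm_mono
      intro x
      rw [Real.norm_eq_abs, Real.norm_eq_abs, abs_of_nonneg (fnorm_nonneg _),
        abs_of_nonneg (fnorm_nonneg _)]
      by_cases hx : x ∈ E j
      · simp only [X', Set.piecewise_eq_of_mem _ _ _ hx, le_refl]
      · simp only [X', Set.piecewise_eq_of_notMem _ _ _ hx, sub_self, fnorm_zero]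
        exact fnorm_nonneg _
    have harg_mem : (eLpNorm (fun x => fnorm (X' j x - Y x)) p' μ).toReal ∈ Set.Icc 0 T :=
      ⟨ENNReal.toReal_nonneg, ENNReal.toReal_mono hXY harg_le⟩
    have hγle : γ ((eLpNorm (fun x => fnorm (X' j x - Y x)) p' μ).toReal) ≤ Γ :=
      le_trans (le_abs_self _) (hΓ _ harg_mem)
    have hfnX'sm : AEStronglyMeasurable (fun x => fnorm (X' j x)) μ :=
      (fnorm_continuous.comp_stronglyMeasurable (hX'SM j)).aestronglyMeasurable
    have hfnsub : AEStronglyMeasurable (fun x => fnorm (X' j x - Y x)) μ :=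
      (fnorm_continuous.comp_stronglyMeasurable ((hX'SM j).sub hY)).aestronglyMeasurable
    have ha : (eLpNorm (fun x => fnorm (X' j x)) p' μ).toReal ≤ R := by
      by_cases hcY : cY = ∞
      · have hXtop : eLpNorm (fun x => fnorm (X' j x)) p' μ = ∞ := by
          by_contra hne
          have hmono1 : cY ≤ eLpNorm (fun x => fnorm (X' j x) + fnorm (Y x - X' j x)) p' μ := by
            apply eLpNorm_mono
            intro x
            rw [Real.norm_eq_abs, Real.norm_eq_abs, abs_of_nonneg (fnorm_nonneg _),
              abs_of_nonneg (add_nonneg (fnorm_nonneg _) (fnorm_nonneg _))]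
            exact fnorm_le_add_sub _ _
          have hmono2 : eLpNorm (fun x => fnorm (Y x - X' j x)) p' μ ≤
              eLpNorm (fun x => fnorm (X x - Y x)) p' μ := by
            refine le_trans (le_of_eq ?_) harg_le
            congr 1
            funext x
            rw [← fnorm_neg (Y x - X' j x), neg_sub]
          have hadd : eLpNorm (fun x => fnorm (X' j x) + fnorm (Y x - X' j x)) p' μ ≤
              eLpNorm (fun x => fnorm (X' j x)) p' μ
              + eLpNorm (fun x => fnorm (Y x - X' j x)) p' μ := eLpNorm_add_le hfnX'sm
            ((fnorm_continuous.comp_stronglyMeasurable (hY.sub (hX'SM j))).aestronglyMeasurable)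
            hp'1
          have hlt : cY < ∞ := by
            calc cY ≤ _ := hmono1
            _ ≤ _ := hadd
            _ ≤ eLpNorm (fun x => fnorm (X' j x)) p' μ
                + eLpNorm (fun x => fnorm (X x - Y x)) p' μ := add_le_add_right hmono2 _
            _ < ∞ := ENNReal.add_lt_top.mpr ⟨lt_top_iff_ne_top.mpr hne, hXY.lt_top⟩
          exact hlt.ne hcY
        rw [hXtop]
        simpa [hRdef, hcY] using hT0
      · have hmono1 : eLpNorm (fun x => fnorm (X' j x)) p' μ ≤
            eLpNorm (fun x => fnorm (Y x) + fnorm (X' j x - Y x)) p' μ := by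
          apply eLpNorm_mono
          intro x
          rw [Real.norm_eq_abs, Real.norm_eq_abs, abs_of_nonneg (fnorm_nonneg _),
            abs_of_nonneg (add_nonneg (fnorm_nonneg _) (fnorm_nonneg _))]
          exact fnorm_le_add_sub _ _
        have hadd : eLpNorm (fun x => fnorm (Y x) + fnorm (X' j x - Y x)) p' μ ≤
            eLpNorm (fun x => fnorm (Y x)) p' μ
            + eLpNorm (fun x => fnorm (X' j x - Y x)) p' μ := eLpNorm_add_le hfnYsm hfnsub hp'1
        have hle : eLpNorm (fun x => fnorm (X' j x)) p' μ ≤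
            cY + eLpNorm (fun x => fnorm (X x - Y x)) p' μ :=
          le_trans (le_trans hmono1 hadd) (add_le_add_right harg_le _)
        have hfin2 : cY + eLpNorm (fun x => fnorm (X x - Y x)) p' μ ≠ ∞ :=
          ENNReal.add_ne_top.mpr ⟨hcY, hXY⟩
        refine le_trans (ENNReal.toReal_mono hfin2 hle) ?_
        rw [ENNReal.toReal_add hcY hXY]
    have hb : (eLpNorm (fun x => fnorm (Y x)) p' μ).toReal ≤ R := by
      rw [hRdef]
      rw [← hcYdef]
      linarith
    have hfac_le : 1 + ((eLpNorm (fun x => fnorm (X' j x)) p' μ).toReal) ^ p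
        + ((eLpNorm (fun x => fnorm (Y x)) p' μ).toReal) ^ p ≤ 1 + R ^ p + R ^ p := by
      have h1 := Real.rpow_le_rpow ENNReal.toReal_nonneg ha hppos.le
      have h2 := Real.rpow_le_rpow ENNReal.toReal_nonneg hb hppos.le
      linarith
    have hfac_nn : 0 ≤ 1 + ((eLpNorm (fun x => fnorm (X' j x)) p' μ).toReal) ^ p
        + ((eLpNorm (fun x => fnorm (Y x)) p' μ).toReal) ^ p := by
      have h1 := Real.rpow_nonneg (ENNReal.toReal_nonneg :
        (0:ℝ) ≤ (eLpNorm (fun x => fnorm (X' j x)) p' μ).toReal) p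
      have h2 := Real.rpow_nonneg (ENNReal.toReal_nonneg :
        (0:ℝ) ≤ (eLpNorm (fun x => fnorm (Y x)) p' μ).toReal) p
      linarith
    exact mul_le_mul hγle hfac_le hfac_nn hΓ0
  have hfin_j : ∀ j, ∫⁻ x, gj j x ∂μ ≠ ∞ := by
    intro j
    have hle : ∫⁻ x, gj j x ∂μ ≤ ((j:ℕ) : ℝ≥0∞) * μ Set.univ := by
      rw [← lintegral_const]
      apply lintegral_mono
      intro x
      by_cases hx : x ∈ E j
      · have hxle : |g x| ≤ (j:ℝ) := hx
        simp only [gj, Set.indicator_of_mem hx, Gfun]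
        calc (‖g x‖₊ : ℝ≥0∞) = ENNReal.ofReal |g x| := by
              exact Real.enorm_eq_ofReal_abs _
        _ ≤ ((j:ℕ) : ℝ≥0∞) := by
              rw [← ENNReal.ofReal_natCast j]
              exact ENNReal.ofReal_le_ofReal hxle
      · simp only [gj, Set.indicator_of_notMem hx]
        exact zero_le
    exact (lt_of_le_of_lt hle (by
      apply ENNReal.mul_lt_top
      · simp
      · exact measure_lt_top μ _)).ne
  obtain ⟨j, hj⟩ : ∃ j, ENNReal.ofReal D < ∫⁻ x, gj j x ∂μ := by
    rw [← lt_iSup_iff, hlim, htop]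
    exact ENNReal.ofReal_lt_top
  have hcontra : D < (∫⁻ x, gj j x ∂μ).toReal := by
    have := (ENNReal.toReal_lt_toReal ENNReal.ofReal_ne_top (hfin_j j)).mpr hj
    rwa [ENNReal.toReal_ofReal hD0] at this
  exact absurd (hbound j) (not_le.mpr hcontra)

end Stmt12Aux


open Stmt12Aux

open Bornology in
/-- reduction of lower semicontinuity along concentrating sequences to
zero background: with `z_n := χ_{{∇w_n ≠ 0}}∇u`, the integral differences agree,
`z_n → 0` in `L^p`, and the two liminfs coincide. -/
theorem stmt12 {M N : ℕ} (p : ℝ) (hp : 1 < p)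
    (Ω : Set (EN N)) (hΩo : IsOpen Ω) (hΩb : IsBounded Ω)
    (v : Mat M N → ℝ) (hv : Continuous v)
    (C : ℝ) (hgr : ∀ s, |v s| ≤ C * (1 + fnorm s ^ p))
    (γ : ℝ → ℝ) (hγc : Continuous γ) (hγ0 : γ 0 = 0)
    (hNem : ∀ U W : EN N → Mat M N,
      AEStronglyMeasurable U (volume.restrict Ω) →
      AEStronglyMeasurable W (volume.restrict Ω) →
      (eLpNorm (fun x => v (U x) - v (W x)) 1 (volume.restrict Ω)).toReal ≤
        γ ((eLpNorm (fun x => fnorm (U x - W x)) (ENNReal.ofReal p)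
              (volume.restrict Ω)).toReal)
          * (1 + ((eLpNorm (fun x => fnorm (U x)) (ENNReal.ofReal p)
              (volume.restrict Ω)).toReal) ^ p
            + ((eLpNorm (fun x => fnorm (W x)) (ENNReal.ofReal p)
              (volume.restrict Ω)).toReal) ^ p))
    (u : EN N → EN M) (hu : Differentiable ℝ u)
    (hugrad : MemLp (fun x => fnorm (grad u x)) (ENNReal.ofReal p) (volume.restrict Ω))
    (w : ℕ → EN N → EN M) (hw : ∀ n, Differentiable ℝ (w n))
    (hwbd : ∃ B : ℝ, ∀ n,
      (eLpNorm (fun x => w n x) (ENNReal.ofReal p) (volume.restrict Ω)).toReal ≤ B ∧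
      (eLpNorm (fun x => fnorm (grad (w n) x)) (ENNReal.ofReal p)
        (volume.restrict Ω)).toReal ≤ B)
    (hsmall : Tendsto (fun n => volume {x ∈ Ω | grad (w n) x ≠ 0}) atTop (nhds 0))
    (z : ℕ → EN N → Mat M N)
    (hz : ∀ n x, z n x = Set.indicator {y | grad (w n) y ≠ 0} (fun y => grad u y) x) :
    (∀ n, ∫ x in Ω, (v (grad (w n) x + grad u x) - v (grad u x)) =
        ∫ x in Ω, (v (grad (w n) x + z n x) - v (z n x))) ∧
    Tendsto (fun n => eLpNorm (fun x => fnorm (z n x)) (ENNReal.ofReal p)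
        (volume.restrict Ω)) atTop (nhds 0) ∧
    ∀ φ : EN N → ℝ, ContinuousOn φ (closure Ω) →
      Filter.liminf (fun n => ∫ x in Ω,
          (v (grad (w n) x + grad u x) - v (grad u x)) * φ x) atTop =
        Filter.liminf (fun n => ∫ x in Ω, (v (grad (w n) x) - v 0) * φ x) atTop := by
  classical
  obtain ⟨B, hB⟩ := hwbd
  have hΩm : MeasurableSet Ω := hΩo.measurableSet
  have hfin : volume Ω ≠ ⊤ := hΩb.measure_lt_top.ne
  have hp'1 : 1 ≤ ENNReal.ofReal p := ENNReal.one_le_ofReal.mpr hp.le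
  have hp't : ENNReal.ofReal p ≠ ⊤ := ENNReal.ofReal_ne_top
  have hppos : (0:ℝ) < p := lt_trans one_pos hp
  set μ := volume.restrict Ω with hμdef
  set p' := ENNReal.ofReal p with hp'def
  haveI : IsFiniteMeasure μ := ⟨by rw [hμdef, Measure.restrict_apply_univ]; exact hfin.lt_top⟩
  set A : ℕ → Set (EN N) := fun n => {y | grad (w n) y ≠ 0} with hAdef
  have hAm : ∀ n, MeasurableSet (A n) := by
    intro n
    have : A n = (grad (w n)) ⁻¹' {(0 : Mat M N)}ᶜ := by
      ext y
      simp [A]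
    rw [this]
    exact (measurable_grad (w n)) (measurableSet_singleton _).compl
  have hzfun : ∀ n, z n = (A n).indicator (grad u) := fun n => funext fun x => hz n x
  have hzSM : ∀ n, StronglyMeasurable (z n) := by
    intro n
    rw [hzfun n]
    exact (sm_grad u).indicator (hAm n)
  have hpt : ∀ n x, v (grad (w n) x + grad u x) - v (grad u x)
      = v (grad (w n) x + z n x) - v (z n x) := by
    intro n x
    rw [hz n x]
    by_cases hx : x ∈ A n
    · rw [Set.indicator_of_mem hx]
    · rw [Set.indicator_of_notMem hx]
      have hx0 : grad (w n) x = 0 := by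
        simpa [A, Set.mem_setOf_eq, not_not] using hx
      rw [hx0]
      simp
  have part1 : ∀ n, (∫ x in Ω, (v (grad (w n) x + grad u x) - v (grad u x))) =
      ∫ x in Ω, (v (grad (w n) x + z n x) - v (z n x)) := fun n =>
    integral_congr_ae (Filter.Eventually.of_forall fun x => hpt n x)
  have hfz : ∀ n, (fun x => fnorm (z n x)) = (A n).indicator (fun x => fnorm (grad u x)) := by
    intro n
    funext x
    rw [hz n x]
    by_cases hx : x ∈ A n
    · rw [Set.indicator_of_mem hx, Set.indicator_of_mem hx]
    · rw [Set.indicator_of_notMem hx, Set.indicator_of_notMem hx, fnorm_zero]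
  have part2 : Tendsto (fun n => eLpNorm (fun x => fnorm (z n x)) p' μ) atTop (𝓝 0) := by
    rw [ENNReal.tendsto_nhds_zero]
    intro ε hε
    have hmin_ne : min 1 ε ≠ 0 := (lt_min one_pos hε).ne'
    have hmin_lt : min 1 ε ≠ ⊤ := (lt_of_le_of_lt (min_le_left _ _) ENNReal.one_lt_top).ne
    have hεrpos : 0 < (min 1 ε).toReal := ENNReal.toReal_pos hmin_ne hmin_lt
    obtain ⟨δ, hδpos, hδ⟩ := hugrad.eLpNorm_indicator_le hp'1 hp't hεrpos
    have hev : ∀ᶠ n in atTop, volume {x ∈ Ω | grad (w n) x ≠ 0} < ENNReal.ofReal δ :=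
      hsmall.eventually_lt_const (ENNReal.ofReal_pos.mpr hδpos)
    filter_upwards [hev] with n hn
    have hμA : μ (A n) ≤ ENNReal.ofReal δ := by
      rw [hμdef, Measure.restrict_apply (hAm n)]
      refine le_of_lt (lt_of_le_of_lt (le_of_eq ?_) hn)
      congr 1
      ext x
      simp only [A, Set.mem_inter_iff, Set.mem_setOf_eq, Set.mem_sep_iff]
      tauto
    calc eLpNorm (fun x => fnorm (z n x)) p' μ
        = eLpNorm ((A n).indicator fun x => fnorm (grad u x)) p' μ := by rw [hfz n]
      _ ≤ ENNReal.ofReal (min 1 ε).toReal := hδ (A n) (hAm n) hμA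
      _ ≤ ε := by
          rw [ENNReal.ofReal_toReal hmin_lt]
          exact min_le_right _ _
  refine ⟨part1, part2, ?_⟩
  intro φ hφ
  -- bound for φ on Ω
  obtain ⟨K0, hK0⟩ := hΩb.isCompact_closure.exists_bound_of_continuousOn hφ
  set K : ℝ := max K0 0 with hKdef
  have hKnn : 0 ≤ K := le_max_right _ _
  have hφbd : ∀ x ∈ Ω, |φ x| ≤ K := fun x hx =>
    le_trans (by simpa [Real.norm_eq_abs] using hK0 x (subset_closure hx)) (le_max_left _ _)
  have hφsm : AEStronglyMeasurable φ μ := by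
    rw [hμdef]
    exact (hφ.mono subset_closure).aestronglyMeasurable hΩm
  have hφae : ∀ᵐ x ∂μ, ‖φ x‖ ≤ K := by
    rw [hμdef]
    filter_upwards [ae_restrict_mem hΩm] with x hx
    simpa [Real.norm_eq_abs] using hφbd x hx
  -- strongly measurable pieces
  have hGwSM : ∀ n, StronglyMeasurable (grad (w n)) := fun n => sm_grad (w n)
  have hUSM : ∀ n, StronglyMeasurable (fun x => grad (w n) x + z n x) := fun n =>
    (hGwSM n).add (hzSM n)
  have hPSM : ∀ n, StronglyMeasurable
      (fun x => v (grad (w n) x + z n x) - v (grad (w n) x)) := fun n =>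
    (hv.comp_stronglyMeasurable (hUSM n)).sub (hv.comp_stronglyMeasurable (hGwSM n))
  have hQSM : ∀ n, StronglyMeasurable (fun x => v (z n x) - v 0) := fun n =>
    (hv.comp_stronglyMeasurable (hzSM n)).sub stronglyMeasurable_const
  -- z in Lp
  have hzLe : ∀ n, eLpNorm (fun x => fnorm (z n x)) p' μ ≤
      eLpNorm (fun x => fnorm (grad u x)) p' μ := by
    intro n
    apply eLpNorm_mono
    intro x
    rw [hz n x, Real.norm_eq_abs, Real.norm_eq_abs, abs_of_nonneg (fnorm_nonneg _)]
    by_cases hx : x ∈ A n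
    · rw [Set.indicator_of_mem hx, abs_of_nonneg (fnorm_nonneg _)]
    · rw [Set.indicator_of_notMem hx, fnorm_zero]
      exact abs_nonneg _
  have hGuLp : eLpNorm (fun x => fnorm (grad u x)) p' μ ≠ ⊤ := hugrad.2.ne
  have hzLp : ∀ n, eLpNorm (fun x => fnorm (z n x)) p' μ ≠ ⊤ := fun n =>
    (lt_of_le_of_lt (hzLe n) hGuLp.lt_top).ne
  set t : ℕ → ℝ := fun n => (eLpNorm (fun x => fnorm (z n x)) p' μ).toReal with htdef
  have ht0 : Tendsto t atTop (𝓝 0) := by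
    have h := (ENNReal.tendsto_toReal (by simp : (0:ℝ≥0∞) ≠ ⊤)).comp part2
    simpa [htdef, Function.comp_def] using h
  have hγt : Tendsto (fun n => γ (t n)) atTop (𝓝 0) := by
    have h := (hγc.tendsto 0).comp ht0
    rwa [hγ0] at h
  -- constants
  set Cu : ℝ := (eLpNorm (fun x => fnorm (grad u x)) p' μ).toReal with hCudef
  have htCu : ∀ n, t n ≤ Cu := fun n => ENNReal.toReal_mono hGuLp (hzLe n)
  have hB0 : 0 ≤ B := le_trans ENNReal.toReal_nonneg (hB 0).2
  have hCu0 : 0 ≤ Cu := ENNReal.toReal_nonneg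
  set R : ℝ := B + Cu with hRdef
  have hR0 : 0 ≤ R := add_nonneg hB0 hCu0
  have ht0n : ∀ n, 0 ≤ t n := fun n => ENNReal.toReal_nonneg
  -- α bound
  have hα : ∀ n, (eLpNorm (fun x => fnorm (grad (w n) x + z n x)) p' μ).toReal ≤ R := by
    intro n
    by_cases hGw : eLpNorm (fun x => fnorm (grad (w n) x)) p' μ = ⊤
    · have htop : eLpNorm (fun x => fnorm (grad (w n) x + z n x)) p' μ = ⊤ := by
        by_contra hne
        have hm1 : eLpNorm (fun x => fnorm (grad (w n) x)) p' μ ≤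
            eLpNorm (fun x => fnorm (grad (w n) x + z n x) + fnorm (z n x)) p' μ := by
          apply eLpNorm_mono
          intro x
          rw [Real.norm_eq_abs, Real.norm_eq_abs, abs_of_nonneg (fnorm_nonneg _),
            abs_of_nonneg (add_nonneg (fnorm_nonneg _) (fnorm_nonneg _))]
          exact fnorm_le_add_left _ _
        have hadd : eLpNorm (fun x => fnorm (grad (w n) x + z n x) + fnorm (z n x)) p' μ ≤
            eLpNorm (fun x => fnorm (grad (w n) x + z n x)) p' μ
            + eLpNorm (fun x => fnorm (z n x)) p' μ :=
          eLpNorm_add_le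
            ((fnorm_continuous.comp_stronglyMeasurable (hUSM n)).aestronglyMeasurable)
            ((fnorm_continuous.comp_stronglyMeasurable (hzSM n)).aestronglyMeasurable) hp'1
        have hlt : eLpNorm (fun x => fnorm (grad (w n) x)) p' μ < ⊤ := by
          calc eLpNorm (fun x => fnorm (grad (w n) x)) p' μ ≤ _ := hm1
          _ ≤ _ := hadd
          _ < ⊤ := ENNReal.add_lt_top.mpr ⟨lt_top_iff_ne_top.mpr hne,
              lt_top_iff_ne_top.mpr (hzLp n)⟩
        exact hlt.ne hGw
      rw [htop]
      simpa using hR0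
    · have hm1 : eLpNorm (fun x => fnorm (grad (w n) x + z n x)) p' μ ≤
          eLpNorm (fun x => fnorm (grad (w n) x) + fnorm (z n x)) p' μ := by
        apply eLpNorm_mono
        intro x
        rw [Real.norm_eq_abs, Real.norm_eq_abs, abs_of_nonneg (fnorm_nonneg _),
          abs_of_nonneg (add_nonneg (fnorm_nonneg _) (fnorm_nonneg _))]
        exact fnorm_add_le _ _
      have hadd : eLpNorm (fun x => fnorm (grad (w n) x) + fnorm (z n x)) p' μ ≤
          eLpNorm (fun x => fnorm (grad (w n) x)) p' μ
          + eLpNorm (fun x => fnorm (z n x)) p' μ :=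
        eLpNorm_add_le
          ((fnorm_continuous.comp_stronglyMeasurable (hGwSM n)).aestronglyMeasurable)
          ((fnorm_continuous.comp_stronglyMeasurable (hzSM n)).aestronglyMeasurable) hp'1
      refine le_trans (ENNReal.toReal_mono (ENNReal.add_ne_top.mpr ⟨hGw, hzLp n⟩)
        (le_trans hm1 hadd)) ?_
      rw [ENNReal.toReal_add hGw (hzLp n)]
      exact add_le_add (hB n).2 (htCu n)
  -- γ (t n) nonneg
  have hz0arg : ∀ n, (fun x => fnorm (z n x - (fun _ : EN N => (0 : Mat M N)) x))
      = fun x => fnorm (z n x) := by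
    intro n
    funext x
    simp
  have hγnn : ∀ n, 0 ≤ γ (t n) := by
    intro n
    have happ := hNem (z n) (fun _ => 0) (hzSM n).aestronglyMeasurable
      stronglyMeasurable_const.aestronglyMeasurable
    rw [hz0arg n] at happ
    have hz00 : eLpNorm (fun x => fnorm ((fun _ : EN N => (0 : Mat M N)) x)) p' μ = 0 := by
      simp [fnorm_zero]
    rw [hz00] at happ
    have hfac : (0:ℝ) < 1 + (t n) ^ p + ((0:ℝ≥0∞).toReal) ^ p := by
      have h1 := Real.rpow_nonneg (ht0n n) p
      have h2 : ((0:ℝ≥0∞).toReal : ℝ) ^ p = 0 := by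
        simp [Real.zero_rpow hppos.ne']
      rw [h2]
      linarith
    have h0le : (0:ℝ) ≤ γ (t n) * (1 + (t n) ^ p + ((0:ℝ≥0∞).toReal) ^ p) :=
      le_trans ENNReal.toReal_nonneg happ
    by_contra hneg
    push_neg at hneg
    have := mul_neg_of_neg_of_pos hneg hfac
    linarith
  -- Dc
  set Dc : ℝ := 1 + R ^ p + R ^ p with hDcdef
  have hDc0 : 0 ≤ Dc := by
    have := Real.rpow_nonneg hR0 p
    rw [hDcdef]
    linarith
  -- P bound
  have hPbd : ∀ n, (eLpNorm (fun x => v (grad (w n) x + z n x) - v (grad (w n) x)) 1 μ).toReal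
      ≤ γ (t n) * Dc := by
    intro n
    have happ := hNem (fun x => grad (w n) x + z n x) (grad (w n))
      (hUSM n).aestronglyMeasurable (hGwSM n).aestronglyMeasurable
    simp only [add_sub_cancel_left] at happ
    refine le_trans happ ?_
    apply mul_le_mul_of_nonneg_left ?_ (hγnn n)
    have h1 := Real.rpow_le_rpow ENNReal.toReal_nonneg (hα n) hppos.le
    have h2 := Real.rpow_le_rpow ENNReal.toReal_nonneg
      (le_trans (hB n).2 (le_add_of_nonneg_right hCu0)) hppos.le
    rw [hDcdef]
    linarith
  -- Q bound
  have hQbd : ∀ n, (eLpNorm (fun x => v (z n x) - v 0) 1 μ).toReal ≤ γ (t n) * Dc := by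
    intro n
    have happ := hNem (z n) (fun _ => 0) (hzSM n).aestronglyMeasurable
      stronglyMeasurable_const.aestronglyMeasurable
    rw [hz0arg n] at happ
    have hz00 : eLpNorm (fun x => fnorm ((fun _ : EN N => (0 : Mat M N)) x)) p' μ = 0 := by
      simp [fnorm_zero]
    rw [hz00] at happ
    refine le_trans happ ?_
    apply mul_le_mul_of_nonneg_left ?_ (hγnn n)
    have h1 := Real.rpow_le_rpow (ht0n n) (le_trans (htCu n) (le_add_of_nonneg_left hB0)) hppos.le
    have h2 : ((0:ℝ≥0∞).toReal : ℝ) ^ p = 0 := by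
      simp [Real.zero_rpow hppos.ne']
    have h3 := Real.rpow_nonneg hR0 p
    rw [hDcdef, h2]
    linarith
  -- finiteness and integrability
  have hPfin : ∀ n, eLpNorm (fun x => v (grad (w n) x + z n x) - v (grad (w n) x)) 1 μ ≠ ⊤ := by
    intro n
    exact lemA p hp Ω hfin v hv γ hγc hNem _ _ (hUSM n) (hGwSM n)
      (by simp only [add_sub_cancel_left]; exact hzLp n)
  have hQfin : ∀ n, eLpNorm (fun x => v (z n x) - v 0) 1 μ ≠ ⊤ := by
    intro n
    exact lemA p hp Ω hfin v hv γ hγc hNem (z n) (fun _ => 0) (hzSM n)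
      stronglyMeasurable_const (by rw [hz0arg n]; exact hzLp n)
  have hPint : ∀ n, Integrable (fun x => v (grad (w n) x + z n x) - v (grad (w n) x)) μ :=
    fun n => memLp_one_iff_integrable.mp
      ⟨(hPSM n).aestronglyMeasurable, lt_top_iff_ne_top.mpr (hPfin n)⟩
  have hQint : ∀ n, Integrable (fun x => v (z n x) - v 0) μ :=
    fun n => memLp_one_iff_integrable.mp
      ⟨(hQSM n).aestronglyMeasurable, lt_top_iff_ne_top.mpr (hQfin n)⟩
  have hPφ : ∀ n, Integrable
      (fun x => (v (grad (w n) x + z n x) - v (grad (w n) x)) * φ x) μ := fun n =>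
    ((hPint n).bdd_mul hφsm hφae).congr (Filter.Eventually.of_forall fun x => mul_comm _ _)
  have hQφ : ∀ n, Integrable (fun x => (v (z n x) - v 0) * φ x) μ := fun n =>
    ((hQint n).bdd_mul hφsm hφae).congr (Filter.Eventually.of_forall fun x => mul_comm _ _)
  -- abs integral bounds
  have hIbnd : ∀ n, ∀ (P : EN N → ℝ), StronglyMeasurable P → Integrable P μ →
      (eLpNorm P 1 μ).toReal ≤ γ (t n) * Dc →
      |∫ x, P x * φ x ∂μ| ≤ K * (γ (t n) * Dc) := by
    intro n P hPsm hPi hPb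
    have hPφi : Integrable (fun x => P x * φ x) μ :=
      (hPi.bdd_mul hφsm hφae).congr (Filter.Eventually.of_forall fun x => mul_comm _ _)
    calc |∫ x, P x * φ x ∂μ| = ‖∫ x, P x * φ x ∂μ‖ := (Real.norm_eq_abs _).symm
    _ ≤ ∫ x, ‖P x * φ x‖ ∂μ := norm_integral_le_integral_norm _
    _ ≤ ∫ x, K * |P x| ∂μ := by
          apply integral_mono_of_nonneg (Filter.Eventually.of_forall fun x => norm_nonneg _)
            ((hPi.abs).const_mul K)
          filter_upwards [hφae] with x hx
          rw [Real.norm_eq_abs, abs_mul]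
          calc |P x| * |φ x| ≤ |P x| * K := by
                apply mul_le_mul_of_nonneg_left _ (abs_nonneg _)
                simpa [Real.norm_eq_abs] using hx
          _ = K * |P x| := mul_comm _ _
    _ = K * ∫ x, |P x| ∂μ := integral_const_mul K _
    _ ≤ K * (γ (t n) * Dc) := by
          apply mul_le_mul_of_nonneg_left _ hKnn
          have heq : ∫ x, |P x| ∂μ = (eLpNorm P 1 μ).toReal := by
            rw [eLpNorm_one_eq_lintegral_enorm]
            simpa [Real.norm_eq_abs] using
              integral_norm_eq_lintegral_enorm hPsm.aestronglyMeasurable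
          rw [heq]
          exact hPb
  -- key per-n bound
  have hkey : ∀ n,
      |(∫ x, (v (grad (w n) x + z n x) - v (z n x)) * φ x ∂μ)
        - ∫ x, (v (grad (w n) x) - v 0) * φ x ∂μ| ≤ 2 * K * Dc * γ (t n) := by
    intro n
    have hptFG : ∀ x : EN N, (v (grad (w n) x + z n x) - v (z n x)) * φ x
        = (v (grad (w n) x) - v 0) * φ x
          + ((v (grad (w n) x + z n x) - v (grad (w n) x)) * φ x
            - (v (z n x) - v 0) * φ x) := by
      intro x
      ring
    by_cases hFi : Integrable (fun x => (v (grad (w n) x + z n x) - v (z n x)) * φ x) μ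
    · have hGi : Integrable (fun x => (v (grad (w n) x) - v 0) * φ x) μ := by
        have hfun : (fun x => (v (grad (w n) x) - v 0) * φ x)
            = fun x => (v (grad (w n) x + z n x) - v (z n x)) * φ x
              - ((v (grad (w n) x + z n x) - v (grad (w n) x)) * φ x
                - (v (z n x) - v 0) * φ x) := by
          funext x
          rw [hptFG x]
          ring
        rw [hfun]
        exact hFi.sub ((hPφ n).sub (hQφ n))
      have hsplit : (∫ x, (v (grad (w n) x + z n x) - v (z n x)) * φ x ∂μ)
          = (∫ x, (v (grad (w n) x) - v 0) * φ x ∂μ)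
            + ((∫ x, (v (grad (w n) x + z n x) - v (grad (w n) x)) * φ x ∂μ)
              - ∫ x, (v (z n x) - v 0) * φ x ∂μ) := by
        have e1 : (∫ x, (v (grad (w n) x + z n x) - v (z n x)) * φ x ∂μ)
            = ∫ x, ((v (grad (w n) x) - v 0) * φ x
              + ((v (grad (w n) x + z n x) - v (grad (w n) x)) * φ x
                - (v (z n x) - v 0) * φ x)) ∂μ :=
          integral_congr_ae (Filter.Eventually.of_forall hptFG)
        have e2 : (∫ x, ((v (grad (w n) x) - v 0) * φ x
              + ((v (grad (w n) x + z n x) - v (grad (w n) x)) * φ x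
                - (v (z n x) - v 0) * φ x)) ∂μ)
            = (∫ x, (v (grad (w n) x) - v 0) * φ x ∂μ)
              + ∫ x, ((v (grad (w n) x + z n x) - v (grad (w n) x)) * φ x
                - (v (z n x) - v 0) * φ x) ∂μ :=
          integral_add hGi ((hPφ n).sub (hQφ n))
        have e3 : (∫ x, ((v (grad (w n) x + z n x) - v (grad (w n) x)) * φ x
                - (v (z n x) - v 0) * φ x) ∂μ)
            = (∫ x, (v (grad (w n) x + z n x) - v (grad (w n) x)) * φ x ∂μ)
              - ∫ x, (v (z n x) - v 0) * φ x ∂μ :=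
          integral_sub (hPφ n) (hQφ n)
        rw [e1, e2, e3]
      rw [hsplit]
      have hIP := hIbnd n _ (hPSM n) (hPint n) (hPbd n)
      have hIQ := hIbnd n _ (hQSM n) (hQint n) (hQbd n)
      have habs : ∀ a b c : ℝ, |a + (b - c) - a| ≤ |b| + |c| := by
        intro a b c
        have : a + (b - c) - a = b - c := by ring
        rw [this]
        exact abs_sub _ _
      calc |_| ≤ _ := habs _ _ _
      _ ≤ K * (γ (t n) * Dc) + K * (γ (t n) * Dc) := add_le_add hIP hIQ
      _ = 2 * K * Dc * γ (t n) := by ring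
    · have hGi : ¬ Integrable (fun x => (v (grad (w n) x) - v 0) * φ x) μ := by
        intro hGi
        apply hFi
        have hfun : (fun x => (v (grad (w n) x + z n x) - v (z n x)) * φ x)
            = fun x => (v (grad (w n) x) - v 0) * φ x
              + ((v (grad (w n) x + z n x) - v (grad (w n) x)) * φ x
                - (v (z n x) - v 0) * φ x) := funext hptFG
        rw [hfun]
        exact hGi.add ((hPφ n).sub (hQφ n))
      rw [integral_undef hFi, integral_undef hGi]
      simp only [sub_zero, abs_zero]
      have h1 : (0:ℝ) ≤ 2 * K * Dc := by positivity
      exact mul_nonneg h1 (hγnn n)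
  -- difference tends to zero
  have hd0 : Tendsto (fun n => (∫ x, (v (grad (w n) x + z n x) - v (z n x)) * φ x ∂μ)
      - ∫ x, (v (grad (w n) x) - v 0) * φ x ∂μ) atTop (𝓝 0) := by
    refine squeeze_zero_norm (a := fun n => 2 * K * Dc * γ (t n))
      (fun n => by rw [Real.norm_eq_abs]; exact hkey n) ?_
    have h := hγt.const_mul (2 * K * Dc)
    simpa using h
  -- conclude
  have hEqfun : (fun n => ∫ x, (v (grad (w n) x + grad u x) - v (grad u x)) * φ x ∂μ)
      = fun n => (∫ x, (v (grad (w n) x) - v 0) * φ x ∂μ)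
        + ((∫ x, (v (grad (w n) x + z n x) - v (z n x)) * φ x ∂μ)
          - ∫ x, (v (grad (w n) x) - v 0) * φ x ∂μ) := by
    funext n
    have h1 : (∫ x, (v (grad (w n) x + grad u x) - v (grad u x)) * φ x ∂μ)
        = ∫ x, (v (grad (w n) x + z n x) - v (z n x)) * φ x ∂μ :=
      integral_congr_ae (Filter.Eventually.of_forall fun x =>
        congrArg (fun y : ℝ => y * φ x) (hpt n x))
    rw [h1]
    ring
  rw [hEqfun]
  exact liminf_add_tendsto_zero hd0
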